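/- Let d > 1 be an odd integer such that 2 is a primitive root modulo d (i.e. the multiplicative order of 2 modulo d equals d − 1, so in particular d is prime), let K ≥ 1 be an integer and N an integer. Then H(d; N, K) = ((d−1)^K − (−1)^K)/d if d does not divide N, and H(d; N, K) = ((d−1)^K + (−1)^K (d−1))/d if d divides N. -/

import Mathlib

/-- `ε n` is the multiplicative order of `2` modulo `n`. -/
noncomputable def ε (n : ℕ) : ℕ := orderOf (2 : ZMod n)

/-- `H d N K` is the number of `K`-tuples `(ν₁, …, ν_K)` with `1 ≤ νᵢ ≤ ε d` such
that `d ∣ N - (2^{ν₁} + ⋯ + 2^{ν_K})`. -/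
noncomputable def H (d : ℕ) (N : ℤ) (K : ℕ) : ℕ :=
  Nat.card {ν : Fin K → ℕ //
    (∀ i, 1 ≤ ν i ∧ ν i ≤ ε d) ∧ (d : ℤ) ∣ N - ∑ i, (2 : ℤ) ^ ν i}

/-- `cnt d K t` counts `K`-tuples of nonzero residues mod `d` summing to `t`. -/
noncomputable def cnt (d K : ℕ) (t : ZMod d) : ℕ :=
  Nat.card {a : Fin K → ZMod d // (∀ i, a i ≠ 0) ∧ ∑ i, a i = t}

lemma cnt_zero (d : ℕ) (t : ZMod d) : cnt d 0 t = if t = 0 then 1 else 0 := by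
  unfold cnt
  split
  · subst t
    rw [Nat.card_eq_one_iff_unique]
    constructor
    · constructor
      rintro ⟨a, -⟩ ⟨b, -⟩
      ext x; exact absurd x.2 (Nat.not_lt_zero _)
    · exact ⟨⟨fun i => 0, fun i => i.elim0, by simp⟩⟩
  · rw [Nat.card_eq_zero]
    left
    constructor
    rintro ⟨a, -, h⟩
    simp at h
    exact ‹t ≠ 0› h.symm

lemma cnt_succ (d K : ℕ) [NeZero d] (t : ZMod d) :
    cnt d (K+1) t = ∑ s : {s : ZMod d // s ≠ 0}, cnt d K (t - s.1) := by
  classical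
  have e : {a : Fin (K+1) → ZMod d // (∀ i, a i ≠ 0) ∧ ∑ i, a i = t} ≃
      Σ s : {s : ZMod d // s ≠ 0},
        {a : Fin K → ZMod d // (∀ i, a i ≠ 0) ∧ ∑ i, a i = t - s.1} := by
    refine ⟨fun a => ⟨⟨a.1 0, a.2.1 0⟩, ⟨Fin.tail a.1, fun i => a.2.1 i.succ, ?_⟩⟩,
      fun p => ⟨Fin.cons p.1.1 p.2.1, ?_, ?_⟩, ?_, ?_⟩
    · have := a.2.2
      rw [Fin.sum_univ_succ] at this
      exact eq_sub_of_add_eq' this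
    · intro i
      refine Fin.cases ?_ ?_ i
      · exact p.1.2
      · intro j; simpa using p.2.2.1 j
    · rw [Fin.sum_univ_succ]
      simp [p.2.2.2]
    · rintro ⟨a, h⟩
      apply Subtype.ext
      exact Fin.cons_self_tail a
    · rintro ⟨s, a⟩
      apply Sigma.ext <;> simp [Fin.tail_cons]
      exact HEq.rfl
  rw [cnt, Nat.card_congr e]
  simp only [Nat.card_eq_fintype_card, Fintype.card_sigma]
  apply Finset.sum_congr rfl
  intro s _
  rw [cnt, Nat.card_eq_fintype_card]

lemma card_ne_zero' (d : ℕ) [NeZero d] :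
    Fintype.card {s : ZMod d // s ≠ 0} = d - 1 := by
  classical
  rw [Fintype.card_subtype_compl, ZMod.card, Fintype.card_subtype_eq]

lemma cnt_formula (d : ℕ) (hd : 1 < d) (K : ℕ) :
    ((cnt d K 0 : ℝ) = (((d:ℝ)-1)^K + (-1)^K*((d:ℝ)-1))/d) ∧
    ∀ t : ZMod d, t ≠ 0 → ((cnt d K t : ℝ) = (((d:ℝ)-1)^K - (-1)^K)/d) := by
  classical
  haveI : NeZero d := ⟨by omega⟩
  have hdR : (d : ℝ) ≠ 0 := Nat.cast_ne_zero.mpr (by omega)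
  induction K with
  | zero =>
    constructor
    · rw [cnt_zero, if_pos rfl]
      push_cast
      rw [pow_zero, pow_zero]
      field_simp
      ring
    · intro t ht; rw [cnt_zero, if_neg ht]; simp
  | succ K ih =>
    have hcard : Fintype.card {s : ZMod d // s ≠ 0} = d - 1 := card_ne_zero' d
    constructor
    · rw [cnt_succ]
      push_cast
      rw [Finset.sum_congr rfl (fun s _ => ih.2 (0 - s.1) (by simp [s.2]))]
      rw [Finset.sum_const, Finset.card_univ, hcard, nsmul_eq_mul,
        Nat.cast_sub hd.le, Nat.cast_one]
      field_simp
      ring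
    · intro t ht
      rw [cnt_succ]
      push_cast
      rw [← Finset.add_sum_erase _ _ (Finset.mem_univ (⟨t, ht⟩ : {s : ZMod d // s ≠ 0}))]
      have key : ∀ s : {s : ZMod d // s ≠ 0},
          s ∈ Finset.univ.erase (⟨t, ht⟩ : {s : ZMod d // s ≠ 0}) →
          ((cnt d K (t - s.1) : ℝ)) = (((d:ℝ)-1)^K - (-1)^K)/d := by
        intro s hs
        apply ih.2
        intro h
        apply Finset.ne_of_mem_erase hs
        apply Subtype.ext
        have h2 : t - s.1 = 0 := h
        rwa [sub_eq_zero, eq_comm] at h2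
      rw [Finset.sum_congr rfl key]
      rw [Finset.sum_const, Finset.card_erase_of_mem (Finset.mem_univ _),
        Finset.card_univ, hcard, nsmul_eq_mul, sub_self, ih.1,
        Nat.cast_sub (by omega), Nat.cast_sub hd.le, Nat.cast_one]
      field_simp
      ring

lemma H_eq_cnt (d : ℕ) (hd1 : 1 < d)
    (hroot : orderOf (2 : ZMod d) = d - 1) (N : ℤ) (K : ℕ) :
    H d N K = cnt d K (N : ZMod d) := by
  classical
  haveI : NeZero d := ⟨by omega⟩
  haveI : Fact (1 < d) := ⟨hd1⟩
  have h2fin : (2 : ZMod d) ^ (d - 1) = 1 := by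
    rw [← hroot]; exact pow_orderOf_eq_one _
  have hu : IsUnit (2 : ZMod d) := IsUnit.of_pow_eq_one h2fin (by omega)
  have pow_ne : ∀ ν : ℕ, (2 : ZMod d) ^ ν ≠ 0 := fun ν => (hu.pow ν).ne_zero
  -- injectivity of ν ↦ 2^ν on [1, d-1]
  have inj : ∀ a b : ℕ, 1 ≤ a → a ≤ d - 1 → 1 ≤ b → b ≤ d - 1 →
      (2 : ZMod d) ^ a = (2 : ZMod d) ^ b → a = b := by
    intro a b ha1 ha2 hb1 hb2 hab
    have hun : ((hu.unit : (ZMod d)ˣ) : ZMod d) = 2 := hu.unit_spec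
    have h2 : hu.unit ^ a = hu.unit ^ b := by
      apply Units.ext
      push_cast [hun]
      exact hab
    have hord : orderOf hu.unit = d - 1 := by
      rw [← orderOf_units, hun, hroot]
    have hmod : a % (d - 1) = b % (d - 1) := by
      have := (pow_eq_pow_iff_modEq).mp h2
      rwa [hord] at this
    have ha' : a % (d - 1) = if a = d - 1 then 0 else a := by
      split
      · simp [*]
      · exact Nat.mod_eq_of_lt (by omega)
    have hb' : b % (d - 1) = if b = d - 1 then 0 else b := by
      split
      · simp [*]
      · exact Nat.mod_eq_of_lt (by omega)
    rw [ha', hb'] at hmod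
    split_ifs at hmod <;> omega
  -- surjectivity onto nonzero residues
  have surj : ∀ x : ZMod d, x ≠ 0 → ∃ ν, 1 ≤ ν ∧ ν ≤ d - 1 ∧ (2 : ZMod d) ^ ν = x := by
    intro x hx
    set S := (Finset.Icc 1 (d - 1)).image (fun ν => (2 : ZMod d) ^ ν) with hS
    have hcardS : S.card = d - 1 := by
      rw [hS, Finset.card_image_of_injOn, Nat.card_Icc]
      · omega
      · intro a ha b hb hab
        simp only [Finset.coe_Icc, Set.mem_Icc] at ha hb
        exact inj a b ha.1 ha.2 hb.1 hb.2 hab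
    have hsub : S ⊆ Finset.univ.erase (0 : ZMod d) := by
      intro y hy
      simp only [hS, Finset.mem_image] at hy
      obtain ⟨ν, -, rfl⟩ := hy
      exact Finset.mem_erase.mpr ⟨pow_ne ν, Finset.mem_univ _⟩
    have hcardE : (Finset.univ.erase (0 : ZMod d)).card = d - 1 := by
      rw [Finset.card_erase_of_mem (Finset.mem_univ _), Finset.card_univ, ZMod.card]
    have hEq : S = Finset.univ.erase (0 : ZMod d) :=
      Finset.eq_of_subset_of_card_le hsub (by omega)
    have hxS : x ∈ S := by
      rw [hEq]
      exact Finset.mem_erase.mpr ⟨hx, Finset.mem_univ _⟩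
    simp only [hS, Finset.mem_image, Finset.mem_Icc] at hxS
    obtain ⟨ν, ⟨h1, h2⟩, h3⟩ := hxS
    exact ⟨ν, h1, h2, h3⟩
  -- the divisibility condition translation
  have dvd_iff : ∀ ν : Fin K → ℕ,
      ((d : ℤ) ∣ N - ∑ i, (2 : ℤ) ^ ν i) ↔ ∑ i, (2 : ZMod d) ^ ν i = (N : ZMod d) := by
    intro ν
    rw [← ZMod.intCast_zmod_eq_zero_iff_dvd]
    push_cast
    rw [sub_eq_zero, eq_comm]
  -- the bijection
  have hε : ε d = d - 1 := hroot
  apply Nat.card_eq_of_bijective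
    (f := fun ν => (⟨fun i => (2 : ZMod d) ^ (ν.1 i), fun i => pow_ne _,
      (dvd_iff ν.1).mp ν.2.2⟩ : {a : Fin K → ZMod d // (∀ i, a i ≠ 0) ∧ ∑ i, a i = (N : ZMod d)}))
  constructor
  · rintro ⟨ν, hν, hd⟩ ⟨ν', hν', hd'⟩ h
    have h' : ∀ i, (2 : ZMod d) ^ (ν i) = (2 : ZMod d) ^ (ν' i) :=
      fun i => congrFun (congrArg Subtype.val h) i
    apply Subtype.ext
    funext i
    exact inj _ _ (hν i).1 (hε ▸ (hν i).2) (hν' i).1 (hε ▸ (hν' i).2) (h' i)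
  · rintro ⟨a, ha, hsum⟩
    choose ν h1 h2 h3 using fun i => surj (a i) (ha i)
    refine ⟨⟨ν, fun i => ⟨h1 i, hε ▸ h2 i⟩, (dvd_iff ν).mpr ?_⟩, ?_⟩
    · rw [Finset.sum_congr rfl (fun i _ => h3 i), hsum]
    · apply Subtype.ext
      funext i
      exact h3 i

/-- If `d > 1` is odd and `2` is a primitive root modulo `d` (its multiplicative
order is `d - 1`), then for `K ≥ 1` and any integer `N`:
`H(d;N,K) = ((d-1)^K - (-1)^K)/d` if `d ∤ N`, and
`H(d;N,K) = ((d-1)^K + (-1)^K (d-1))/d` if `d ∣ N`. -/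
theorem H_of_primitive_root (d : ℕ) (hd1 : 1 < d) (hodd : Odd d)
    (hroot : orderOf (2 : ZMod d) = d - 1) (K : ℕ) (hK : 1 ≤ K) (N : ℤ) :
    (¬ (d : ℤ) ∣ N →
      (H d N K : ℝ) = (((d : ℝ) - 1) ^ K - (-1 : ℝ) ^ K) / d) ∧
    ((d : ℤ) ∣ N →
      (H d N K : ℝ) = (((d : ℝ) - 1) ^ K + (-1 : ℝ) ^ K * ((d : ℝ) - 1)) / d) := by
  rw [H_eq_cnt d hd1 hroot N K]
  constructor
  · intro hdvd
    refine (cnt_formula d hd1 K).2 _ ?_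
    rwa [Ne, ZMod.intCast_zmod_eq_zero_iff_dvd]
  · intro hdvd
    have h0 : ((N : ZMod d)) = 0 := (ZMod.intCast_zmod_eq_zero_iff_dvd N d).mpr hdvd
    rw [h0]
    exact (cnt_formula d hd1 K).1
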